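/- arXiv:1808.07622 — 5 statements merged into one kernel-verified Lean document; each statement's English description precedes it below -/
import Mathlib

section
/- Let X be a real Banach space in which every bounded sequence admits a weakly convergent subsequence (as holds when X is reflexive). Let Φ : X → ℝ be continuously Fréchet differentiable and coercive, and suppose Φ' = A + B, where A : X → X* is of type (S)₊ and B : X → X* is continuous and maps bounded sets to relatively compact sets. Then Φ satisfies the Palais–Smale condition: every sequence (xₙ) ⊆ X such that (Φ(xₙ)) is bounded and ‖Φ'(xₙ)‖_{X*} → 0 has a strongly convergent subsequence. -/
open Filter

/-- Let `X` be a real Banach space in which every bounded sequence admits a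
weakly convergent subsequence. Let `Φ : X → ℝ` be continuously Fréchet differentiable and
coercive, with `Φ' = A + B`, where `A` is of type (S)₊ and `B` is continuous and maps bounded
sets to relatively compact sets. Then `Φ` satisfies the Palais–Smale condition. -/
theorem stmt_0
    {X : Type*} [NormedAddCommGroup X] [NormedSpace ℝ X] [CompleteSpace X]
    -- every bounded sequence admits a weakly convergent subsequence
    (hweak : ∀ u : ℕ → X, (∃ M : ℝ, ∀ n, ‖u n‖ ≤ M) →
      ∃ (σ : ℕ → ℕ) (x : X), StrictMono σ ∧
        ∀ f : X →L[ℝ] ℝ, Filter.Tendsto (fun n => f (u (σ n))) Filter.atTop (nhds (f x)))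
    (Φ : X → ℝ) (Φ' : X → (X →L[ℝ] ℝ))
    -- Φ is continuously Fréchet differentiable with derivative Φ'
    (hderiv : ∀ x : X, HasFDerivAt Φ (Φ' x) x)
    (hderivCont : Continuous Φ')
    -- Φ is coercive
    (hcoercive : Filter.Tendsto Φ (Filter.comap norm Filter.atTop) Filter.atTop)
    (A B : X → (X →L[ℝ] ℝ))
    (hAB : ∀ x : X, Φ' x = A x + B x)
    -- A is of type (S)₊
    (hA : ∀ (u : ℕ → X) (x : X),
      (∀ f : X →L[ℝ] ℝ, Filter.Tendsto (fun n => f (u n)) Filter.atTop (nhds (f x))) →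
      Filter.limsup (fun n => A (u n) (u n - x)) Filter.atTop ≤ 0 →
      Filter.Tendsto u Filter.atTop (nhds x))
    -- B is continuous and maps bounded sets to relatively compact sets
    (hBcont : Continuous B)
    (hBcompact : ∀ s : Set X, Bornology.IsBounded s → IsCompact (closure (B '' s))) :
    -- Palais–Smale condition
    ∀ u : ℕ → X, (∃ M : ℝ, ∀ n, |Φ (u n)| ≤ M) →
      Filter.Tendsto (fun n => ‖Φ' (u n)‖) Filter.atTop (nhds 0) →
      ∃ (σ : ℕ → ℕ) (x : X), StrictMono σ ∧
        Filter.Tendsto (fun n => u (σ n)) Filter.atTop (nhds x) := by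
  rintro u ⟨M, hM⟩ hΦ'
  -- Step 1: the sequence is bounded, by coercivity.
  have hbound : ∃ R : ℝ, 0 ≤ R ∧ ∀ n, ‖u n‖ ≤ R := by
    have h1 := (Filter.tendsto_atTop.mp hcoercive) (M + 1)
    rw [Filter.eventually_comap, Filter.eventually_atTop] at h1
    obtain ⟨R, hRp⟩ := h1
    refine ⟨max R 0, le_max_right _ _, fun n => ?_⟩
    by_contra h
    push_neg at h
    have h2 : R ≤ ‖u n‖ := le_of_lt (lt_of_le_of_lt (le_max_left _ _) h)
    have h3 := hRp ‖u n‖ h2 (u n) rfl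
    have h4 := (abs_le.mp (hM n)).2
    linarith
  obtain ⟨R, hR0, hR⟩ := hbound
  -- Step 2: weakly convergent subsequence.
  obtain ⟨σ, x, hσ, hx⟩ := hweak u ⟨R, hR⟩
  -- Step 3: extract a further subsequence along which B converges strongly.
  have hball : Bornology.IsBounded (Metric.closedBall (0 : X) R) :=
    Metric.isBounded_closedBall
  have hmem : ∀ n, B (u (σ n)) ∈ closure (B '' Metric.closedBall (0 : X) R) := by
    intro n
    apply subset_closure
    exact Set.mem_image_of_mem B (by simpa [Metric.mem_closedBall, dist_zero_right] using hR (σ n))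
  obtain ⟨g, -, τ, hτ, hgl⟩ := (hBcompact _ hball).tendsto_subseq hmem
  set v : ℕ → X := fun n => u (σ (τ n)) with hv
  have hvnorm : ∀ n, ‖v n‖ ≤ R := fun n => hR _
  -- v converges weakly to x
  have hvweak : ∀ f : X →L[ℝ] ℝ, Tendsto (fun n => f (v n)) atTop (nhds (f x)) :=
    fun f => (hx f).comp hτ.tendsto_atTop
  have hsub : ∀ n, ‖v n - x‖ ≤ R + ‖x‖ := fun n =>
    (norm_sub_le _ _).trans (add_le_add (hvnorm n) le_rfl)
  -- ‖Φ' (v n)‖ → 0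
  have hΦ'v : Tendsto (fun n => ‖Φ' (v n)‖) atTop (nhds 0) :=
    hΦ'.comp ((hσ.comp hτ).tendsto_atTop)
  -- Φ' (v n) (v n - x) → 0
  have h1 : Tendsto (fun n => Φ' (v n) (v n - x)) atTop (nhds 0) := by
    have hb : Tendsto (fun n => ‖Φ' (v n)‖ * (R + ‖x‖)) atTop (nhds 0) := by
      simpa using hΦ'v.mul_const (R + ‖x‖)
    refine squeeze_zero_norm (fun n => ?_) hb
    calc ‖Φ' (v n) (v n - x)‖ ≤ ‖Φ' (v n)‖ * ‖v n - x‖ :=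
          (Φ' (v n)).le_opNorm _
      _ ≤ ‖Φ' (v n)‖ * (R + ‖x‖) :=
          mul_le_mul_of_nonneg_left (hsub n) (norm_nonneg _)
  -- ‖B (v n) - g‖ → 0
  have hBnorm : Tendsto (fun n => ‖B (v n) - g‖) atTop (nhds 0) := by
    have := tendsto_iff_norm_sub_tendsto_zero.mp hgl
    simpa [Function.comp, hv] using this
  -- (B (v n) - g) (v n - x) → 0
  have h2 : Tendsto (fun n => (B (v n) - g) (v n - x)) atTop (nhds 0) := by
    have hb : Tendsto (fun n => ‖B (v n) - g‖ * (R + ‖x‖)) atTop (nhds 0) := by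
      simpa using hBnorm.mul_const (R + ‖x‖)
    refine squeeze_zero_norm (fun n => ?_) hb
    calc ‖(B (v n) - g) (v n - x)‖ ≤ ‖B (v n) - g‖ * ‖v n - x‖ :=
          (B (v n) - g).le_opNorm _
      _ ≤ ‖B (v n) - g‖ * (R + ‖x‖) :=
          mul_le_mul_of_nonneg_left (hsub n) (norm_nonneg _)
  -- g (v n - x) → 0
  have h3 : Tendsto (fun n => g (v n - x)) atTop (nhds 0) := by
    have := (hvweak g).sub_const (g x)
    simpa [map_sub] using this
  -- B (v n) (v n - x) → 0
  have h4 : Tendsto (fun n => B (v n) (v n - x)) atTop (nhds 0) := by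
    have := h2.add h3
    simpa [ContinuousLinearMap.sub_apply, sub_add_cancel] using this
  -- A (v n) (v n - x) → 0
  have h5 : Tendsto (fun n => A (v n) (v n - x)) atTop (nhds 0) := by
    have heq : ∀ n, A (v n) (v n - x) = Φ' (v n) (v n - x) - B (v n) (v n - x) := by
      intro n
      rw [hAB (v n)]
      simp [ContinuousLinearMap.add_apply]
    simp only [heq]
    simpa using h1.sub h4
  have hlimsup : Filter.limsup (fun n => A (v n) (v n - x)) Filter.atTop ≤ 0 :=
    le_of_eq h5.limsup_eq
  have hconv := hA v x hvweak hlimsup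
  exact ⟨σ ∘ τ, x, hσ.comp hτ, hconv⟩
end

section
/- Let N ≥ 1 and let a₀ : (0,∞) → (0,∞) be continuous with t ↦ t·a₀(t) strictly increasing on (0,∞) and lim_{t→0⁺} t·a₀(t) = 0. Define a : ℝ^N → ℝ^N by a(ξ) = a₀(|ξ|)ξ for ξ ≠ 0 and a(0) = 0. Then a is continuous on ℝ^N and strictly monotone: ⟨a(ξ) − a(ζ), ξ − ζ⟩ > 0 for all ξ, ζ ∈ ℝ^N with ξ ≠ ζ. -/
open scoped RealInnerProductSpace

/-- Let `N ≥ 1` and let `a₀ : (0,∞) → (0,∞)` be continuous with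
`t ↦ t·a₀(t)` strictly increasing on `(0,∞)` and `lim_{t→0⁺} t·a₀(t) = 0`. Define
`a(ξ) = a₀(|ξ|)ξ` for `ξ ≠ 0` and `a(0) = 0`. Then `a` is continuous on `ℝ^N` and
strictly monotone: `⟨a(ξ) − a(ζ), ξ − ζ⟩ > 0` whenever `ξ ≠ ζ`. -/
theorem stmt_1
    (N : ℕ) (hN : 1 ≤ N)
    (a₀ : ℝ → ℝ)
    (ha₀pos : ∀ t ∈ Set.Ioi (0 : ℝ), 0 < a₀ t)
    (ha₀cont : ContinuousOn a₀ (Set.Ioi (0 : ℝ)))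
    (hmono : StrictMonoOn (fun t => t * a₀ t) (Set.Ioi (0 : ℝ)))
    (hlim : Filter.Tendsto (fun t => t * a₀ t) (nhdsWithin 0 (Set.Ioi (0 : ℝ))) (nhds 0))
    (a : EuclideanSpace ℝ (Fin N) → EuclideanSpace ℝ (Fin N))
    (ha : ∀ ξ : EuclideanSpace ℝ (Fin N), ξ ≠ 0 → a ξ = a₀ ‖ξ‖ • ξ)
    (ha0 : a 0 = 0) :
    Continuous a ∧
      ∀ ξ ζ : EuclideanSpace ℝ (Fin N), ξ ≠ ζ → 0 < ⟪a ξ - a ζ, ξ - ζ⟫ := by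
  constructor
  · rw [continuous_iff_continuousAt]
    intro x
    by_cases hx : x = 0
    · subst hx
      rw [ContinuousAt, ha0]
      have hsup := nhdsNE_sup_pure (0 : EuclideanSpace ℝ (Fin N))
      refine Filter.Tendsto.mono_left (Filter.Tendsto.sup ?_ ?_) hsup.ge
      · rw [tendsto_zero_iff_norm_tendsto_zero]
        have hn : Filter.Tendsto (fun ξ : EuclideanSpace ℝ (Fin N) => ‖ξ‖)
            (nhdsWithin 0 {(0 : EuclideanSpace ℝ (Fin N))}ᶜ) (nhdsWithin 0 (Set.Ioi 0)) := by
          rw [tendsto_nhdsWithin_iff]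
          refine ⟨(continuous_norm.tendsto' 0 0 norm_zero).mono_left nhdsWithin_le_nhds, ?_⟩
          filter_upwards [self_mem_nhdsWithin] with ξ hξ
          exact norm_pos_iff.mpr hξ
        refine (hlim.comp hn).congr' ?_
        filter_upwards [self_mem_nhdsWithin] with ξ hξ
        have hξ0 : ξ ≠ 0 := hξ
        rw [Function.comp_apply, ha ξ hξ0, norm_smul, Real.norm_eq_abs,
          abs_of_pos (ha₀pos _ (norm_pos_iff.mpr hξ0)), mul_comm]
      · rw [Filter.tendsto_pure_left]
        intro s hs
        simpa [ha0] using mem_of_mem_nhds hs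
    · have hxnorm : (0:ℝ) < ‖x‖ := norm_pos_iff.mpr hx
      have hopen : IsOpen {ξ : EuclideanSpace ℝ (Fin N) | ξ ≠ 0} := isOpen_ne
      have heq : ∀ᶠ ξ in nhds x, a ξ = a₀ ‖ξ‖ • ξ := by
        filter_upwards [hopen.mem_nhds hx] with ξ hξ
        exact ha ξ hξ
      refine ContinuousAt.congr ?_ (Filter.EventuallyEq.symm heq)
      have h1 : ContinuousAt (fun ξ : EuclideanSpace ℝ (Fin N) => a₀ ‖ξ‖) x := by
        refine ContinuousAt.comp ?_ continuous_norm.continuousAt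
        exact ha₀cont.continuousAt (isOpen_Ioi.mem_nhds hxnorm)
      exact h1.smul continuousAt_id
  · intro ξ ζ hne
    rcases eq_or_ne ζ 0 with rfl | hζ
    · have hξ : ξ ≠ 0 := hne
      have hξn : (0:ℝ) < ‖ξ‖ := norm_pos_iff.mpr hξ
      rw [ha ξ hξ, ha0, sub_zero, sub_zero, real_inner_smul_left, real_inner_self_eq_norm_sq]
      have := ha₀pos _ hξn
      positivity
    · rcases eq_or_ne ξ 0 with rfl | hξ
      · have hζn : (0:ℝ) < ‖ζ‖ := norm_pos_iff.mpr hζ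
        rw [ha ζ hζ, ha0, zero_sub, zero_sub, inner_neg_neg, real_inner_smul_left,
          real_inner_self_eq_norm_sq]
        have := ha₀pos _ hζn
        positivity
      · have hξn : (0:ℝ) < ‖ξ‖ := norm_pos_iff.mpr hξ
        have hζn : (0:ℝ) < ‖ζ‖ := norm_pos_iff.mpr hζ
        set r := ‖ξ‖
        set s := ‖ζ‖
        have hp : ⟪ξ, ζ⟫ ≤ r * s := real_inner_le_norm ξ ζ
        have hAr := ha₀pos r hξn
        have hAs := ha₀pos s hζn
        have hexp : ⟪a ξ - a ζ, ξ - ζ⟫ =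
            a₀ r * (r * r) + a₀ s * (s * s) - (a₀ r + a₀ s) * ⟪ξ, ζ⟫ := by
          rw [ha ξ hξ, ha ζ hζ, inner_sub_left, inner_sub_right, inner_sub_right,
            real_inner_smul_left, real_inner_smul_left, real_inner_smul_left,
            real_inner_smul_left, real_inner_self_eq_norm_sq, real_inner_self_eq_norm_sq,
            real_inner_comm ζ ξ]
          ring
        rw [hexp]
        rcases lt_trichotomy r s with h | h | h
        · have hm : r * a₀ r < s * a₀ s := hmono hξn hζn h
          nlinarith
        · have hps : ⟪ξ, ζ⟫ < r * s := by
            rw [inner_lt_norm_mul_iff_real]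
            intro hcontra
            apply hne
            have h2 : (‖ζ‖ : ℝ) • ξ = ‖ζ‖ • ζ := by
              rw [hcontra]; show (r : ℝ) • ζ = s • ζ; rw [h]
            exact smul_right_injective _ (ne_of_gt hζn) h2
          have h1 : r * r = r * s := by rw [h]
          have h2 : s * s = r * s := by rw [← h]
          nlinarith [mul_pos (add_pos hAr hAs) (sub_pos.mpr hps)]
        · have hm : s * a₀ s < r * a₀ r := hmono hζn hξn h
          nlinarith
end

section
/- Let N ≥ 1, 1 < p < ∞, and c₃ > 0. Let a : ℝ^N → ℝ^N be continuous with a(0) = 0 and differentiable on ℝ^N \ {0}, and suppose ⟨Da(ξ)y, y⟩ ≥ c₃|ξ|^{p−2}|y|² for all ξ ∈ ℝ^N \ {0} and all y ∈ ℝ^N. Then ⟨a(ξ), ξ⟩ ≥ (c₃/(p−1))·|ξ|^p for every ξ ∈ ℝ^N. -/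
open scoped RealInnerProductSpace

/-- Let `N ≥ 1`, `1 < p < ∞`, `c₃ > 0`. Let `a : ℝ^N → ℝ^N` be continuous
with `a(0) = 0`, differentiable away from `0`, and suppose
`⟨Da(ξ)y, y⟩ ≥ c₃|ξ|^{p−2}|y|²` for all `ξ ≠ 0` and all `y`. Then
`⟨a(ξ), ξ⟩ ≥ (c₃/(p−1))·|ξ|^p` for every `ξ`. -/
theorem stmt_3
    (N : ℕ) (hN : 1 ≤ N)
    (p c₃ : ℝ) (hp : 1 < p) (hc₃ : 0 < c₃)
    (a : EuclideanSpace ℝ (Fin N) → EuclideanSpace ℝ (Fin N))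
    (hacont : Continuous a) (ha0 : a 0 = 0)
    (Da : EuclideanSpace ℝ (Fin N) → (EuclideanSpace ℝ (Fin N) →L[ℝ] EuclideanSpace ℝ (Fin N)))
    (hDa : ∀ ξ : EuclideanSpace ℝ (Fin N), ξ ≠ 0 → HasFDerivAt a (Da ξ) ξ)
    (hDabound : ∀ ξ : EuclideanSpace ℝ (Fin N), ξ ≠ 0 →
      ∀ y : EuclideanSpace ℝ (Fin N), c₃ * ‖ξ‖ ^ (p - 2) * ‖y‖ ^ 2 ≤ ⟪Da ξ y, y⟫) :
    ∀ ξ : EuclideanSpace ℝ (Fin N), c₃ / (p - 1) * ‖ξ‖ ^ p ≤ ⟪a ξ, ξ⟫ := by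
  intro ξ
  have hp1 : (0:ℝ) < p - 1 := by linarith
  rcases eq_or_ne ξ 0 with rfl | hξ
  · simp [Real.zero_rpow (by positivity : p ≠ 0)]
  have hξpos : (0:ℝ) < ‖ξ‖ := norm_pos_iff.mpr hξ
  set D : ℝ → ℝ := fun t => ⟪a (t • ξ), ξ⟫ - c₃/(p-1) * t ^ (p-1) * ‖ξ‖ ^ p with hDdef
  have hcontD : ContinuousOn D (Set.Icc 0 1) := by
    apply ContinuousOn.sub
    · exact (Continuous.inner (hacont.comp (continuous_id.smul continuous_const))
        continuous_const).continuousOn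
    · refine ContinuousOn.mul (ContinuousOn.mul continuousOn_const ?_) continuousOn_const
      intro t _
      exact (Real.continuousAt_rpow_const t (p-1) (Or.inr hp1.le)).continuousWithinAt
  have hderiv : ∀ t ∈ Set.Ioo (0:ℝ) 1,
      HasDerivAt D (⟪Da (t • ξ) ξ, ξ⟫ - c₃ * t ^ (p-2) * ‖ξ‖ ^ p) t := by
    intro t ht
    have htξ : t • ξ ≠ 0 := smul_ne_zero (ne_of_gt ht.1) hξ
    have h1 : HasDerivAt (fun t : ℝ => t • ξ) ξ t := by
      simpa using (hasDerivAt_id t).smul_const ξ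
    have h2 : HasDerivAt (fun t => a (t • ξ)) (Da (t • ξ) ξ) t :=
      (hDa _ htξ).comp_hasDerivAt t h1
    have h3 : HasDerivAt (fun t => ⟪a (t • ξ), ξ⟫) (⟪Da (t • ξ) ξ, ξ⟫) t := by
      simpa using h2.inner ℝ (hasDerivAt_const t ξ)
    have h4 : HasDerivAt (fun t : ℝ => t ^ (p-1)) ((p-1) * t ^ (p-2)) t := by
      have h := Real.hasDerivAt_rpow_const (x := t) (p := p-1) (Or.inl (ne_of_gt ht.1))
      have : p - 1 - 1 = p - 2 := by ring
      rwa [this] at h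
    have h5 := h3.sub (((h4.const_mul (c₃/(p-1))).mul_const (‖ξ‖ ^ p)))
    refine h5.congr_deriv ?_
    rw [← mul_assoc, div_mul_cancel₀ _ (ne_of_gt hp1)]
  have hmono : MonotoneOn D (Set.Icc 0 1) := by
    apply monotoneOn_of_deriv_nonneg (convex_Icc 0 1) hcontD
    · rw [interior_Icc]
      exact fun t ht => (hderiv t ht).differentiableAt.differentiableWithinAt
    · rw [interior_Icc]
      intro t ht
      rw [(hderiv t ht).deriv]
      have hb := hDabound (t • ξ) (smul_ne_zero (ne_of_gt ht.1) hξ) ξ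
      have hn : ‖t • ξ‖ = t * ‖ξ‖ := by
        rw [norm_smul, Real.norm_eq_abs, abs_of_pos ht.1]
      rw [hn, Real.mul_rpow ht.1.le hξpos.le] at hb
      have hr : ‖ξ‖ ^ (p-2) * ‖ξ‖ ^ 2 = ‖ξ‖ ^ p := by
        rw [show ((‖ξ‖:ℝ) ^ (2:ℕ)) = ‖ξ‖ ^ ((2:ℕ):ℝ) from (Real.rpow_natCast _ 2).symm,
          ← Real.rpow_add hξpos]
        norm_num
      have : c₃ * t ^ (p-2) * ‖ξ‖ ^ p ≤ ⟪Da (t • ξ) ξ, ξ⟫ := by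
        calc c₃ * t ^ (p-2) * ‖ξ‖ ^ p = c₃ * (t ^ (p-2) * ‖ξ‖ ^ (p-2)) * ‖ξ‖ ^ 2 := by
              rw [show c₃ * (t ^ (p-2) * ‖ξ‖ ^ (p-2)) * ‖ξ‖ ^ 2
                  = c₃ * t ^ (p-2) * (‖ξ‖ ^ (p-2) * ‖ξ‖ ^ 2) from by ring, hr]
          _ ≤ _ := hb
      linarith
  have h01 := hmono (Set.left_mem_Icc.mpr zero_le_one) (Set.right_mem_Icc.mpr zero_le_one) zero_le_one
  have hD0 : D 0 = 0 := by
    simp [hDdef, ha0, Real.zero_rpow (ne_of_gt hp1)]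
  have hD1 : D 1 = ⟪a ξ, ξ⟫ - c₃/(p-1) * ‖ξ‖ ^ p := by
    simp [hDdef, Real.one_rpow]
  rw [hD0, hD1] at h01
  linarith
end

section
/- Let g : [0,1] → ℝ be continuous with g(0) = 0 and differentiable at every point of (0,1]. Suppose there exists t* ∈ (0,1) such that g(t) < 0 for all t ∈ (0,t*), and suppose g'(t₀) > 0 for every t₀ ∈ (0,1] with g(t₀) = 0. Then there exists a unique t₁ ∈ (0,1] such that g(t) < 0 for all t ∈ (0,t₁) and g(t) > 0 for all t ∈ (t₁,1]. -/
open Set Filter Topology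

lemma crossing {g : ℝ → ℝ} {t₀ : ℝ} (h : DifferentiableAt ℝ g t₀) (h0 : g t₀ = 0)
    (hpos : 0 < deriv g t₀) :
    ∃ ε > 0, (∀ t, t₀ - ε < t → t < t₀ → g t < 0) ∧ (∀ t, t₀ < t → t < t₀ + ε → 0 < g t) := by
  have hs := hasDerivAt_iff_tendsto_slope.mp h.hasDerivAt
  have hev : ∀ᶠ t in 𝓝[≠] t₀, 0 < slope g t₀ t := hs (Ioi_mem_nhds hpos)
  rw [eventually_nhdsWithin_iff, Metric.eventually_nhds_iff] at hev
  obtain ⟨ε, hε, H⟩ := hev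
  have key : ∀ t, |t - t₀| < ε → t ≠ t₀ → 0 < g t / (t - t₀) := by
    intro t ht hne
    have := H (show dist t t₀ < ε by rwa [Real.dist_eq]) hne
    rwa [slope_def_field, h0, sub_zero] at this
  refine ⟨ε, hε, fun t h1 h2 => ?_, fun t h1 h2 => ?_⟩
  · have hk := key t (by rw [abs_of_neg (by linarith)]; linarith) (by linarith)
    rcases div_pos_iff.mp hk with ⟨_, h⟩ | ⟨h, _⟩
    · linarith
    · linarith
  · have hk := key t (by rw [abs_of_pos (by linarith)]; linarith) (by linarith)
    rcases div_pos_iff.mp hk with ⟨h, _⟩ | ⟨_, h⟩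
    · linarith
    · linarith

/-- Let `g : [0,1] → ℝ` be continuous with `g(0) = 0`, differentiable at
every point of `(0,1]`. Suppose there is `t* ∈ (0,1)` with `g < 0` on `(0,t*)`, and
`g'(t₀) > 0` whenever `t₀ ∈ (0,1]` and `g(t₀) = 0`. Then there is a unique `t₁ ∈ (0,1]`
such that `g < 0` on `(0,t₁)` and `g > 0` on `(t₁,1]`. -/
theorem stmt_7
    (g : ℝ → ℝ)
    (hgcont : ContinuousOn g (Set.Icc (0 : ℝ) 1))
    (hg0 : g 0 = 0)
    (hdiff : ∀ t ∈ Set.Ioc (0 : ℝ) 1, DifferentiableAt ℝ g t)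
    (tstar : ℝ) (htstar : tstar ∈ Set.Ioo (0 : ℝ) 1)
    (hneg : ∀ t ∈ Set.Ioo (0 : ℝ) tstar, g t < 0)
    (hder : ∀ t₀ ∈ Set.Ioc (0 : ℝ) 1, g t₀ = 0 → 0 < deriv g t₀) :
    ∃! t₁ : ℝ, t₁ ∈ Set.Ioc (0 : ℝ) 1 ∧
      (∀ t ∈ Set.Ioo (0 : ℝ) t₁, g t < 0) ∧ (∀ t ∈ Set.Ioc t₁ 1, 0 < g t) := by
  classical
  set T : Set ℝ := {t | t ∈ Set.Icc (0:ℝ) 1 ∧ ∀ s ∈ Set.Ioo (0:ℝ) t, g s < 0} with hT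
  have htsT : tstar ∈ T := ⟨⟨htstar.1.le, htstar.2.le⟩, hneg⟩
  have hbdd : BddAbove T := ⟨1, fun t ht => ht.1.2⟩
  set t₁ := sSup T with ht₁def
  have hts_le : tstar ≤ t₁ := le_csSup hbdd htsT
  have ht₁pos : 0 < t₁ := lt_of_lt_of_le htstar.1 hts_le
  have ht₁le : t₁ ≤ 1 := csSup_le ⟨tstar, htsT⟩ (fun t ht => ht.1.2)
  have hnegIoo : ∀ s ∈ Set.Ioo (0:ℝ) t₁, g s < 0 := by
    intro s hs
    obtain ⟨t, htT, hst⟩ := exists_lt_of_lt_csSup ⟨tstar, htsT⟩ hs.2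
    exact htT.2 s ⟨hs.1, hst⟩
  -- g t₁ ≤ 0 by continuity from the left
  have hlim : g t₁ ≤ 0 := by
    have hc : ContinuousWithinAt g (Set.Ioo 0 t₁) t₁ :=
      (hgcont t₁ ⟨ht₁pos.le, ht₁le⟩).mono (fun s hs => ⟨hs.1.le, hs.2.le.trans ht₁le⟩)
    haveI : (𝓝[Set.Ioo (0:ℝ) t₁] t₁).NeBot := by
      apply mem_closure_iff_nhdsWithin_neBot.mp
      rw [closure_Ioo ht₁pos.ne]
      exact right_mem_Icc.mpr ht₁pos.le
    exact le_of_tendsto hc.tendsto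
      (eventually_mem_nhdsWithin.mono (fun s hs => (hnegIoo s hs).le))
  have hposIoc : ∀ t ∈ Set.Ioc t₁ 1, 0 < g t := by
    rcases lt_or_eq_of_le hlim with hlt | heq
    · -- g t₁ < 0 forces t₁ = 1
      have h1 : t₁ = 1 := by
        by_contra hne1
        have ht₁lt1 : t₁ < 1 := lt_of_le_of_ne ht₁le hne1
        have hc : ContinuousWithinAt g (Set.Icc 0 1) t₁ := hgcont t₁ ⟨ht₁pos.le, ht₁le⟩
        have hev : ∀ᶠ s in 𝓝[Set.Icc (0:ℝ) 1] t₁, g s < 0 := hc (Iio_mem_nhds hlt)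
        rw [eventually_nhdsWithin_iff, Metric.eventually_nhds_iff] at hev
        obtain ⟨δ, hδ, H⟩ := hev
        set t' := min (t₁ + δ/2) 1 with ht'def
        have ht't₁ : t₁ < t' := lt_min (by linarith) ht₁lt1
        have ht'T : t' ∈ T := by
          refine ⟨⟨le_min (by linarith) zero_le_one, min_le_right _ _⟩, ?_⟩
          intro s hs
          rcases lt_or_ge s t₁ with h | h
          · exact hnegIoo s ⟨hs.1, h⟩
          · have hs2 : s < t₁ + δ/2 := lt_of_lt_of_le hs.2 (min_le_left _ _)
            have hs3 : s ≤ 1 := le_trans hs.2.le (min_le_right _ _)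
            exact H (by rw [Real.dist_eq, abs_of_nonneg (by linarith)]; linarith)
              ⟨by linarith [hs.1], hs3⟩
        have := le_csSup hbdd ht'T
        rw [← ht₁def] at this
        linarith
      intro t ht
      rw [h1, Set.Ioc_self] at ht
      exact ht.elim
    · -- g t₁ = 0
      have heq' : g t₁ = 0 := heq
      by_contra hcon
      push_neg at hcon
      obtain ⟨u, hu, hgu⟩ := hcon
      obtain ⟨ε, hε, hL, hR⟩ :=
        crossing (hdiff t₁ ⟨ht₁pos, ht₁le⟩) heq' (hder t₁ ⟨ht₁pos, ht₁le⟩ heq')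
      have huge : t₁ + ε ≤ u := by
        by_contra h
        push_neg at h
        exact absurd (hR u hu.1 h) (not_lt.mpr hgu)
      set w := t₁ + ε/2 with hwdef
      have hwu : w < u := by simp only [hwdef]; linarith
      have hwt₁ : t₁ < w := by simp only [hwdef]; linarith
      have hgw_pos : ∀ s, t₁ < s → s ≤ w → 0 < g s :=
        fun s h1 h2 => hR s h1 (by simp only [hwdef] at h2; linarith)
      set B := Set.Icc w u ∩ g ⁻¹' Set.Iic 0 with hBdef
      have hBne : B.Nonempty := ⟨u, ⟨hwu.le, le_refl u⟩, hgu⟩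
      have hBbdd : BddBelow B := ⟨w, fun t ht => ht.1.1⟩
      have hsub : Set.Icc w u ⊆ Set.Icc (0:ℝ) 1 :=
        fun s hs => ⟨le_trans (by linarith) hs.1, le_trans hs.2 hu.2⟩
      have hBclosed : IsClosed B :=
        ContinuousOn.preimage_isClosed_of_isClosed (hgcont.mono hsub) isClosed_Icc isClosed_Iic
      set v := sInf B with hvdef
      have hvB : v ∈ B := hBclosed.csInf_mem hBne hBbdd
      have hgv_le : g v ≤ 0 := hvB.2
      have hwv : w < v := by
        rcases lt_or_eq_of_le hvB.1.1 with h | h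
        · exact h
        · exfalso
          have hp := hgw_pos w hwt₁ le_rfl
          rw [← h] at hgv_le
          linarith
      have hposbelow : ∀ t, w ≤ t → t < v → 0 < g t := by
        intro t h1 h2
        by_contra hc
        push_neg at hc
        have : v ≤ t := csInf_le hBbdd ⟨⟨h1, le_trans h2.le hvB.1.2⟩, hc⟩
        linarith
      have hv01 : v ∈ Set.Ioc (0:ℝ) 1 := ⟨by linarith, le_trans hvB.1.2 hu.2⟩
      -- g v ≥ 0 by continuity from the left with positives
      have hgv_ge : 0 ≤ g v := by
        have hc : ContinuousWithinAt g (Set.Ioo w v) v :=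
          (hgcont v ⟨hv01.1.le, hv01.2⟩).mono
            (fun s hs => ⟨by linarith [hs.1], le_trans hs.2.le hv01.2⟩)
        haveI : (𝓝[Set.Ioo w v] v).NeBot := by
          apply mem_closure_iff_nhdsWithin_neBot.mp
          rw [closure_Ioo hwv.ne]
          exact right_mem_Icc.mpr hwv.le
        exact ge_of_tendsto hc.tendsto
          (eventually_mem_nhdsWithin.mono (fun s hs => (hposbelow s hs.1.le hs.2).le))
      have hgv : g v = 0 := le_antisymm hgv_le hgv_ge
      obtain ⟨ε', hε', hL', _⟩ := crossing (hdiff v hv01) hgv (hder v hv01 hgv)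
      set m := max w (v - ε'/2) with hmdef
      have hm1 : m < v := max_lt hwv (by linarith)
      have hm2 : v - ε' < m := lt_of_lt_of_le (by linarith) (le_max_right _ _)
      have hm3 : w ≤ m := le_max_left _ _
      have := hposbelow m hm3 hm1
      have := hL' m hm2 hm1
      linarith
  refine ⟨t₁, ⟨⟨ht₁pos, ht₁le⟩, hnegIoo, hposIoc⟩, ?_⟩
  rintro t' ⟨ht'mem, ht'neg, ht'pos⟩
  rcases lt_trichotomy t' t₁ with h | h | h
  · exfalso
    set m := (t' + t₁)/2 with hmdef
    have hm1 : t' < m := by simp only [hmdef]; linarith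
    have hm2 : m < t₁ := by simp only [hmdef]; linarith
    have h1 := ht'pos m ⟨hm1, by linarith⟩
    have h2 := hnegIoo m ⟨by linarith [ht'mem.1], hm2⟩
    linarith
  · exact h
  · exfalso
    set m := (t₁ + t')/2 with hmdef
    have hm1 : t₁ < m := by simp only [hmdef]; linarith
    have hm2 : m < t' := by simp only [hmdef]; linarith
    have h1 := hposIoc m ⟨hm1, by linarith [ht'mem.2]⟩
    have h2 := ht'neg m ⟨by linarith, hm2⟩
    linarith
end

section
/- Let r > 2, b ∈ ℝ, M > 0, and let f : ℝ → ℝ be continuous with |f(t)| ≤ M for all t ∈ ℝ and limsup_{t→0, t≠0} f(t)/t ≤ b. Define F(t) := ∫₀ᵗ f(s) ds. Then for every ε > 0 there exists C > 0 such that F(t) ≤ (1/2)(b+ε)t² + C|t|^r for all t ∈ ℝ. -/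
/-- Let `r > 2`, `b ∈ ℝ`, `M > 0`, and `f : ℝ → ℝ` continuous with
`|f| ≤ M` and `limsup_{t→0, t≠0} f(t)/t ≤ b`. Let `F(t) := ∫₀ᵗ f(s) ds`. Then for every
`ε > 0` there exists `C > 0` such that `F(t) ≤ ½(b+ε)t² + C|t|^r` for all `t`. -/
theorem stmt_10
    (r b M : ℝ) (hr : 2 < r) (hM : 0 < M)
    (f : ℝ → ℝ)
    (hfcont : Continuous f)
    (hbd : ∀ t : ℝ, |f t| ≤ M)
    (hlimsup : Filter.limsup (fun t => ((f t / t : ℝ) : EReal))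
      (nhdsWithin 0 {(0 : ℝ)}ᶜ) ≤ (b : EReal))
    (F : ℝ → ℝ)
    (hF : ∀ t : ℝ, F t = ∫ s in (0 : ℝ)..t, f s) :
    ∀ ε > (0 : ℝ), ∃ C > (0 : ℝ), ∀ t : ℝ,
      F t ≤ 1 / 2 * (b + ε) * t ^ 2 + C * |t| ^ r := by
  intro ε hε
  set c : ℝ := b + ε with hc
  -- eventually f t / t < c
  have hlt : Filter.limsup (fun t => ((f t / t : ℝ) : EReal))
      (nhdsWithin 0 {(0 : ℝ)}ᶜ) < ((c : ℝ) : EReal) := by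
    refine lt_of_le_of_lt hlimsup ?_
    exact_mod_cast (by linarith : b < c)
  have hev : ∀ᶠ t in nhdsWithin 0 {(0 : ℝ)}ᶜ, ((f t / t : ℝ) : EReal) < ((c : ℝ) : EReal) :=
    Filter.eventually_lt_of_limsup_lt hlt
  rw [Filter.Eventually, Metric.mem_nhdsWithin_iff] at hev
  obtain ⟨δ, hδ, hδ'⟩ := hev
  have key : ∀ x : ℝ, |x| < δ → x ≠ 0 → f x / x < c := by
    intro x hx hx0
    have hx' : x ∈ Metric.ball (0:ℝ) δ ∩ {(0:ℝ)}ᶜ :=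
      ⟨by simpa [Metric.mem_ball, Real.dist_eq] using hx, by simpa using hx0⟩
    have := hδ' hx'
    exact_mod_cast this
  -- f positive-side bound
  have hpos : ∀ x : ℝ, 0 < x → x < δ → f x ≤ c * x := by
    intro x hx hxδ
    have := key x (by rw [abs_of_pos hx]; exact hxδ) (ne_of_gt hx)
    nlinarith [(div_lt_iff₀ hx).mp this]
  have hneg : ∀ x : ℝ, x < 0 → -δ < x → c * x ≤ f x := by
    intro x hx hxδ
    have := key x (by rw [abs_of_neg hx]; linarith) (ne_of_lt hx)
    nlinarith [(div_lt_iff_of_neg hx).mp this]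
  -- f 0 = 0
  have hf0le : f 0 ≤ 0 := by
    have h1 : Filter.Tendsto f (nhdsWithin 0 (Set.Ioi 0)) (nhds (f 0)) :=
      (hfcont.tendsto 0).mono_left nhdsWithin_le_nhds
    have h2 : Filter.Tendsto (fun s : ℝ => c * s) (nhdsWithin 0 (Set.Ioi 0)) (nhds 0) := by
      have h0 : Filter.Tendsto (fun s : ℝ => c * s) (nhds 0) (nhds (c * 0)) :=
        (continuous_const.mul continuous_id).tendsto 0
      simpa using h0.mono_left nhdsWithin_le_nhds
    refine le_of_tendsto_of_tendsto h1 h2 ?_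
    filter_upwards [Ioo_mem_nhdsGT_of_mem (⟨le_refl 0, hδ⟩ :
      (0:ℝ) ∈ Set.Ico 0 δ)] with x hx
    exact hpos x hx.1 hx.2
  have hf0ge : 0 ≤ f 0 := by
    have h1 : Filter.Tendsto f (nhdsWithin 0 (Set.Iio 0)) (nhds (f 0)) :=
      (hfcont.tendsto 0).mono_left nhdsWithin_le_nhds
    have h2 : Filter.Tendsto (fun s : ℝ => c * s) (nhdsWithin 0 (Set.Iio 0)) (nhds 0) := by
      have h0 : Filter.Tendsto (fun s : ℝ => c * s) (nhds 0) (nhds (c * 0)) :=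
        (continuous_const.mul continuous_id).tendsto 0
      simpa using h0.mono_left nhdsWithin_le_nhds
    refine le_of_tendsto_of_tendsto h2 h1 ?_
    filter_upwards [Ioo_mem_nhdsLT_of_mem (⟨by linarith, le_refl 0⟩ :
      (0:ℝ) ∈ Set.Ioc (-δ) 0)] with x hx
    exact hneg x hx.2 hx.1
  have hf0 : f 0 = 0 := le_antisymm hf0le hf0ge
  -- the constant
  refine ⟨(M / δ + |c| / 2) / δ ^ (r - 2) + 1, by positivity, ?_⟩
  set C : ℝ := (M / δ + |c| / 2) / δ ^ (r - 2) + 1 with hC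
  clear_value C
  have hCpos : 0 < C := by rw [hC]; positivity
  intro t
  rcases le_or_gt δ |t| with hbig | hsmall
  · -- large |t|
    have ht0 : 0 < |t| := lt_of_lt_of_le hδ hbig
    have hFt : |F t| ≤ M * |t| := by
      rw [hF t]
      have := intervalIntegral.norm_integral_le_of_norm_le_const
        (C := M) (f := f) (a := (0:ℝ)) (b := t) (fun x _ => by simpa using hbd x)
      simpa [Real.norm_eq_abs] using this
    have hsplit : |t| ^ r = |t| ^ (r - 2) * t ^ 2 := by
      rw [show t ^ 2 = |t| ^ 2 from (sq_abs t).symm,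
        ← Real.rpow_natCast |t| 2, ← Real.rpow_add ht0]
      norm_num
    have hmono : δ ^ (r - 2) ≤ |t| ^ (r - 2) :=
      Real.rpow_le_rpow (le_of_lt hδ) hbig (by linarith)
    have hδr : (0:ℝ) < δ ^ (r - 2) := Real.rpow_pos_of_pos hδ _
    have h1 : δ ^ (r - 2) * t ^ 2 ≤ |t| ^ r := by
      rw [hsplit]
      exact mul_le_mul_of_nonneg_right hmono (sq_nonneg t)
    have hCbound : M / δ + |c| / 2 ≤ C * δ ^ (r - 2) := by
      rw [hC]
      rw [add_mul, div_mul_cancel₀ _ (ne_of_gt hδr)]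
      nlinarith
    have h3 : δ * |t| ≤ t ^ 2 := by
      have := mul_le_mul_of_nonneg_right hbig (le_of_lt ht0)
      nlinarith [sq_abs t]
    have habs : F t ≤ M * |t| := le_trans (le_abs_self _) hFt
    have hct : -(|c|) * t ^ 2 ≤ c * t ^ 2 := by
      nlinarith [neg_abs_le c, sq_nonneg t]
    have h4 : C * δ ^ (r - 2) * t ^ 2 ≤ C * |t| ^ r := by
      calc C * δ ^ (r - 2) * t ^ 2 = C * (δ ^ (r - 2) * t ^ 2) := by ring
        _ ≤ C * |t| ^ r := mul_le_mul_of_nonneg_left h1 (le_of_lt hCpos)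
    have h5 : (M / δ + |c| / 2) * t ^ 2 ≤ C * δ ^ (r - 2) * t ^ 2 :=
      mul_le_mul_of_nonneg_right hCbound (sq_nonneg t)
    have h6 : M * |t| ≤ M / δ * t ^ 2 := by
      rw [div_mul_eq_mul_div, le_div_iff₀ hδ]
      calc M * |t| * δ = M * (δ * |t|) := by ring
        _ ≤ M * t ^ 2 := mul_le_mul_of_nonneg_left h3 (le_of_lt hM)
    nlinarith
  · -- small |t|
    have hrpow : 0 ≤ C * |t| ^ r := by positivity
    have hmain : F t ≤ 1 / 2 * c * t ^ 2 := by
      rcases lt_trichotomy t 0 with htneg | ht0 | htpos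
      · -- negative t
        have hint : ∫ s in t..(0:ℝ), c * s ≤ ∫ s in t..(0:ℝ), f s := by
          apply intervalIntegral.integral_mono_on (le_of_lt htneg)
            ((continuous_const.mul continuous_id).intervalIntegrable _ _)
            (hfcont.intervalIntegrable _ _)
          intro x hx
          rcases eq_or_lt_of_le hx.2 with h | h
          · simp [h, hf0]
          · exact hneg x h (by have := abs_of_neg htneg; linarith [hx.1, hsmall,
              (abs_of_neg htneg) ▸ hsmall])
        have hval : (∫ s in t..(0:ℝ), c * s) = -(c * t ^ 2 / 2) := by
          rw [intervalIntegral.integral_const_mul, integral_id]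
          ring
        have : F t = -(∫ s in t..(0:ℝ), f s) := by
          rw [hF t, intervalIntegral.integral_symm]
        rw [this]
        rw [hval] at hint
        linarith
      · simp [hF, ht0, intervalIntegral.integral_same]
      · have hint : ∫ s in (0:ℝ)..t, f s ≤ ∫ s in (0:ℝ)..t, c * s := by
          apply intervalIntegral.integral_mono_on (le_of_lt htpos)
            (hfcont.intervalIntegrable _ _)
            ((continuous_const.mul continuous_id).intervalIntegrable _ _)
          intro x hx
          rcases eq_or_lt_of_le hx.1 with h | h
          · simp [← h, hf0]
          · exact hpos x h (by have := abs_of_pos htpos; linarith [hx.2])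
        have hval : (∫ s in (0:ℝ)..t, c * s) = c * t ^ 2 / 2 := by
          rw [intervalIntegral.integral_const_mul, integral_id]
          ring
        rw [hF t]
        rw [hval] at hint
        linarith
    linarith
end
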